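/- Let G be a group acting by automorphisms on a simplicial tree T, let v be a vertex of T, and let X be a generating set of G such that d_T(v, x·v) ≤ 1 for all x ∈ X ∪ X^{-1}, where d_T is the graph metric on T. Suppose the stabilizer Stab_G(v) is finite. Then the Cayley graph Cay(G,X) is δ-hyperbolic for δ = 2·Rad_X(Stab_G(v)), where Rad_X(S) = max{|g|_X : g ∈ S} and |g|_X is the word length of g with respect to X. -/

import Mathlib

open Function

namespace IsoSpecPaper

variable {G : Type*} [Group G]

/-- The word length of `g` with respect to the (symmetrized) generating set `X ⊆ G`. -/
noncomputable def wlenSet (X : Set G) (g : G) : ℕ :=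
  sInf {n | ∃ L : List G, L.length = n ∧ (∀ x ∈ L, x ∈ X ∨ x⁻¹ ∈ X) ∧ L.prod = g}

/-- The word metric on `G` with respect to the generating set `X`. -/
noncomputable def wdistSet (X : Set G) (g h : G) : ℕ := wlenSet X (g⁻¹ * h)

/-- A (combinatorial) geodesic path of length `n` in the Cayley graph `Cay(G,X)`. -/
noncomputable def IsGeodesicSet (X : Set G) {n : ℕ} (p : Fin (n + 1) → G) : Prop :=
  (∀ i : Fin n, wdistSet X (p i.castSucc) (p i.succ) ≤ 1) ∧
  wdistSet X (p 0) (p (Fin.last n)) = n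

/-- Every vertex of the path `p` lies within distance `δ` of the set `A`. -/
noncomputable def ThinAtSet (X : Set G) (δ : ℝ) {n : ℕ}
    (p : Fin (n + 1) → G) (A : Set G) : Prop :=
  ∀ i, ∃ a ∈ A, (wdistSet X (p i) a : ℝ) ≤ δ

/-- The Cayley graph `Cay(G,X)` is `δ`-hyperbolic: all geodesic triangles are `δ`-thin. -/
noncomputable def HypConstSet (X : Set G) (δ : ℝ) : Prop :=
  ∀ (n₁ n₂ n₃ : ℕ) (p : Fin (n₁ + 1) → G) (q : Fin (n₂ + 1) → G) (r : Fin (n₃ + 1) → G),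
    IsGeodesicSet X p → IsGeodesicSet X q → IsGeodesicSet X r →
    p (Fin.last n₁) = q 0 → q (Fin.last n₂) = r 0 → r (Fin.last n₃) = p 0 →
    ThinAtSet X δ p (Set.range q ∪ Set.range r) ∧
    ThinAtSet X δ q (Set.range r ∪ Set.range p) ∧
    ThinAtSet X δ r (Set.range p ∪ Set.range q)

/-- The radius of a subset `S ⊆ G` with respect to the generating set `X`. -/
noncomputable def RadSet (X : Set G) (S : Set G) : ℕ := sSup (wlenSet X '' S)

/-! ### Auxiliary lemmas: tree geometry -/

set_option linter.unusedSectionVars false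

section Tree

variable {V : Type*} [DecidableEq V] {T : SimpleGraph V}

/-- `m` lies on every walk from `a` to `b`. -/
def OnGeo (T : SimpleGraph V) (a b m : V) : Prop := ∀ W : T.Walk a b, m ∈ W.support

lemma ongeo_of_path (hT : T.IsTree) {a b m : V} {P : T.Walk a b} (hP : P.IsPath)
    (hm : m ∈ P.support) : OnGeo T a b m := by
  intro W
  have h1 : (⟨W.bypass, W.bypass_isPath⟩ : T.Path a b) = ⟨P, hP⟩ :=
    hT.IsAcyclic.path_unique _ _
  have h2 : W.bypass = P := congrArg Subtype.val h1
  exact W.support_bypass_subset (h2 ▸ hm)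

lemma ongeo_symm {a b m : V} (h : OnGeo T a b m) : OnGeo T b a m := by
  intro W
  have := h W.reverse
  rw [SimpleGraph.Walk.support_reverse, List.mem_reverse] at this
  exact this

/-- A canonical path between two vertices of a tree. -/
noncomputable def tp (hT : T.IsTree) (a b : V) : T.Walk a b :=
  (hT.isConnected.preconnected a b).some.bypass

lemma tp_isPath (hT : T.IsTree) (a b : V) : (tp hT a b).IsPath :=
  SimpleGraph.Walk.bypass_isPath _

lemma ongeo_iff (hT : T.IsTree) {a b m : V} :
    OnGeo T a b m ↔ m ∈ (tp hT a b).support :=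
  ⟨fun h => h _, fun h => ongeo_of_path hT (tp_isPath hT a b) h⟩

lemma tp_seg_subset (hT : T.IsTree) {a b m : V} (hm : OnGeo T a b m) :
    (tp hT m b).support ⊆ (tp hT a b).support := by
  have hm' : m ∈ (tp hT a b).support := (ongeo_iff hT).mp hm
  have hd : ((tp hT a b).dropUntil m hm').IsPath := (tp_isPath hT a b).dropUntil hm'
  have h1 : (⟨tp hT m b, tp_isPath hT m b⟩ : T.Path m b) = ⟨_, hd⟩ :=
    hT.IsAcyclic.path_unique _ _
  have h2 : tp hT m b = (tp hT a b).dropUntil m hm' := congrArg Subtype.val h1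
  rw [h2]
  exact SimpleGraph.Walk.support_dropUntil_subset _ _

lemma med_aux (hT : T.IsTree) (b : V) {w a : V} (Q : T.Walk w a) (hQ : Q.IsPath) :
    ∃ m, OnGeo T a b m ∧ OnGeo T w b m ∧ m ∈ Q.support := by
  induction Q with
  | nil =>
    exact ⟨_, fun W => W.start_mem_support, fun W => W.start_mem_support, by simp⟩
  | @cons w u a h Q' ih =>
    rw [SimpleGraph.Walk.cons_isPath_iff] at hQ
    obtain ⟨hQ', hw⟩ := hQ
    obtain ⟨m', h1, h2, h3⟩ := ih hQ'
    by_cases hcase : OnGeo T a b w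
    · exact ⟨w, hcase, fun W => W.start_mem_support, by simp⟩
    · refine ⟨m', h1, ?_, by simp [h3]⟩
      intro W
      have h2W : m' ∈ (SimpleGraph.Walk.cons h.symm W).support := h2 _
      rw [SimpleGraph.Walk.support_cons, List.mem_cons] at h2W
      rcases h2W with h2W | h2W
      · -- m' = u : show every walk from w to b passes through u
        subst h2W
        have husub : (tp hT m' b).support ⊆ (tp hT a b).support :=
          tp_seg_subset hT h1
        have hwn : w ∉ (tp hT m' b).support := by
          intro hc
          exact hcase ((ongeo_iff hT).mpr (husub hc))
        have hpath : (SimpleGraph.Walk.cons h (tp hT m' b)).IsPath :=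
          (tp_isPath hT m' b).cons hwn
        have : OnGeo T w b m' :=
          ongeo_of_path hT hpath (by simp [SimpleGraph.Walk.support_cons,
            SimpleGraph.Walk.start_mem_support])
        exact this W
      · exact h2W

lemma median (hT : T.IsTree) (a b w : V) :
    ∃ m, OnGeo T a b m ∧ OnGeo T a w m ∧ OnGeo T w b m := by
  obtain ⟨m, h1, h2, h3⟩ := med_aux hT b (tp hT w a) (tp_isPath hT w a)
  exact ⟨m, h1, ongeo_symm (ongeo_of_path hT (tp_isPath hT w a) h3), h2⟩

lemma ongeo_split (hT : T.IsTree) {a b m : V} (c : V) (h : OnGeo T a b m) :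
    OnGeo T a c m ∨ OnGeo T c b m := by
  have := h ((tp hT a c).append (tp hT c b))
  rw [SimpleGraph.Walk.mem_support_append_iff] at this
  rcases this with h' | h'
  · exact Or.inl (ongeo_of_path hT (tp_isPath hT a c) h')
  · exact Or.inr (ongeo_of_path hT (tp_isPath hT c b) h')

lemma support_short {x y : V} (P : T.Walk x y) (h : P.length ≤ 1) :
    ∀ z ∈ P.support, z = x ∨ z = y := by
  cases P with
  | nil => simp
  | cons hadj q =>
    cases q with
    | nil => intro z hz; simp at hz; tauto
    | cons h' q' => simp [SimpleGraph.Walk.length_cons] at h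

lemma seq_walk (hT : T.IsTree) (s : ℕ → V) (n : ℕ)
    (hs : ∀ j, j < n → T.dist (s j) (s (j + 1)) ≤ 1) :
    ∃ W : T.Walk (s 0) (s n), ∀ x ∈ W.support, ∃ j, j ≤ n ∧ s j = x := by
  induction n with
  | zero =>
    exact ⟨SimpleGraph.Walk.nil, by intro x hx; simp at hx; exact ⟨0, le_rfl, hx.symm⟩⟩
  | succ n ih =>
    obtain ⟨W, hW⟩ := ih (fun j hj => hs j (by omega))
    by_cases hz : T.dist (s n) (s (n + 1)) = 0
    · have he : s n = s (n + 1) := (hT.isConnected.dist_eq_zero_iff).mp hz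
      refine ⟨W.copy rfl he, ?_⟩
      intro x hx
      rw [SimpleGraph.Walk.support_copy] at hx
      obtain ⟨j, hj, hjx⟩ := hW x hx
      exact ⟨j, by omega, hjx⟩
    · obtain ⟨P, hP⟩ := SimpleGraph.exists_walk_of_dist_ne_zero hz
      refine ⟨W.append P, ?_⟩
      intro x hx
      rw [SimpleGraph.Walk.mem_support_append_iff] at hx
      rcases hx with hx | hx
      · obtain ⟨j, hj, hjx⟩ := hW x hx
        exact ⟨j, by omega, hjx⟩
      · have hlen : P.length ≤ 1 := by rw [hP]; exact hs n (by omega)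
        rcases support_short P hlen x hx with h' | h'
        · exact ⟨n, by omega, h'.symm⟩
        · exact ⟨n + 1, le_rfl, h'.symm⟩

lemma seq_hit (hT : T.IsTree) (s : ℕ → V) (n : ℕ)
    (hs : ∀ j, j < n → T.dist (s j) (s (j + 1)) ≤ 1) (m : V)
    (hm : OnGeo T (s 0) (s n) m) : ∃ j, j ≤ n ∧ s j = m := by
  obtain ⟨W, hW⟩ := seq_walk hT s n hs
  obtain ⟨j, hj, hjm⟩ := hW m (hm W)
  exact ⟨j, hj, hjm⟩

end Tree

/-! ### Auxiliary lemmas: word metric -/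

section Word

variable {X : Set G} (hgen : Subgroup.closure X = ⊤)
include hgen

lemma exists_word (g : G) :
    ∃ L : List G, (∀ x ∈ L, x ∈ X ∨ x⁻¹ ∈ X) ∧ L.prod = g := by
  have hg : g ∈ Subgroup.closure X := hgen ▸ Subgroup.mem_top g
  induction hg using Subgroup.closure_induction with
  | mem x hx => exact ⟨[x], by simp [hx], by simp⟩
  | one => exact ⟨[], by simp, by simp⟩
  | mul x y hx hy ihx ihy =>
    obtain ⟨L1, h1, h1p⟩ := ihx
    obtain ⟨L2, h2, h2p⟩ := ihy
    refine ⟨L1 ++ L2, ?_, by simp [h1p, h2p]⟩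
    intro z hz
    rcases List.mem_append.mp hz with h | h
    · exact h1 z h
    · exact h2 z h
  | inv x hx ihx =>
    obtain ⟨L, h1, h1p⟩ := ihx
    refine ⟨(L.map fun y => y⁻¹).reverse, ?_, ?_⟩
    · intro z hz
      rw [List.mem_reverse, List.mem_map] at hz
      obtain ⟨y, hy, rfl⟩ := hz
      rcases h1 y hy with h | h
      · exact Or.inr (by simpa using h)
      · exact Or.inl h
    · rw [← List.prod_inv_reverse, h1p]

lemma wlen_spec (g : G) :
    ∃ L : List G, L.length = wlenSet X g ∧ (∀ x ∈ L, x ∈ X ∨ x⁻¹ ∈ X) ∧ L.prod = g := by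
  have hne : {n | ∃ L : List G, L.length = n ∧ (∀ x ∈ L, x ∈ X ∨ x⁻¹ ∈ X) ∧ L.prod = g}.Nonempty := by
    obtain ⟨L, h1, h2⟩ := exists_word hgen g
    exact ⟨L.length, L, rfl, h1, h2⟩
  exact Nat.sInf_mem hne

omit hgen in
lemma wlen_le (L : List G) (hL : ∀ x ∈ L, x ∈ X ∨ x⁻¹ ∈ X) :
    wlenSet X L.prod ≤ L.length :=
  Nat.sInf_le ⟨L, rfl, hL, rfl⟩

omit hgen in
lemma wlen_one : wlenSet X (1 : G) = 0 :=
  Nat.le_zero.mp (by simpa using wlen_le (X := X) [] (by simp))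

lemma wlen_mul_le (g h : G) : wlenSet X (g * h) ≤ wlenSet X g + wlenSet X h := by
  obtain ⟨L1, hl1, h1, h1p⟩ := wlen_spec hgen g
  obtain ⟨L2, hl2, h2, h2p⟩ := wlen_spec hgen h
  have := wlen_le (L1 ++ L2) (by
    intro z hz; rcases List.mem_append.mp hz with hz | hz
    exacts [h1 z hz, h2 z hz])
  simpa [h1p, h2p, hl1, hl2] using this

lemma wlen_inv_le (g : G) : wlenSet X g⁻¹ ≤ wlenSet X g := by
  obtain ⟨L, hl, h1, h1p⟩ := wlen_spec hgen g
  have := wlen_le ((L.map fun y => y⁻¹).reverse) (by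
    intro z hz
    rw [List.mem_reverse, List.mem_map] at hz
    obtain ⟨y, hy, rfl⟩ := hz
    rcases h1 y hy with h | h
    · exact Or.inr (by simpa using h)
    · exact Or.inl h)
  rw [← List.prod_inv_reverse, h1p] at this
  simpa [hl] using this

omit hgen in
lemma wdist_self (g : G) : wdistSet X g g = 0 := by
  simp only [wdistSet, inv_mul_cancel]
  exact wlen_one

lemma wdist_symm (g h : G) : wdistSet X g h = wdistSet X h g := by
  have h1 := wlen_inv_le hgen (X := X) (g⁻¹ * h)
  have h2 := wlen_inv_le hgen (X := X) (h⁻¹ * g)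
  simp only [mul_inv_rev, inv_inv] at h1 h2
  unfold wdistSet
  exact le_antisymm h2 h1

lemma wdist_triangle (g h k : G) :
    wdistSet X g k ≤ wdistSet X g h + wdistSet X h k := by
  have : g⁻¹ * k = (g⁻¹ * h) * (h⁻¹ * k) := by group
  rw [wdistSet, this]
  exact wlen_mul_le hgen _ _

lemma wdist_le_one {g h : G} (hle : wdistSet X g h ≤ 1) :
    g = h ∨ ∃ x : G, (x ∈ X ∨ x⁻¹ ∈ X) ∧ h = g * x := by
  obtain ⟨L, hl, h1, h1p⟩ := wlen_spec hgen (g⁻¹ * h)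
  rw [wdistSet] at hle
  match L, hl, h1, h1p with
  | [], hl, h1, h1p =>
    left
    have hgh : g⁻¹ * h = 1 := by simpa using h1p.symm
    have := mul_eq_one_iff_inv_eq.mp hgh
    rw [inv_inv] at this
    exact this
  | [x], hl, h1, h1p =>
    right
    refine ⟨x, h1 x (by simp), ?_⟩
    have hgh : x = g⁻¹ * h := by simpa using h1p
    rw [hgh]
    group
  | x :: y :: L', hl, h1, h1p =>
    exfalso
    rw [← hl] at hle
    simp at hle

/-- Geodesics: distance between points upper bound. -/
lemma geo_chain {n : ℕ} {p : Fin (n + 1) → G} (hp : IsGeodesicSet X p)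
    (d : ℕ) : ∀ i : ℕ, (h : i + d ≤ n) →
    wdistSet X (p ⟨i, by omega⟩) (p ⟨i + d, by omega⟩) ≤ d := by
  induction d with
  | zero =>
    intro i h
    have : (⟨i + 0, by omega⟩ : Fin (n + 1)) = ⟨i, by omega⟩ := Fin.ext rfl
    rw [this]
    simp [wdist_self]
  | succ d ih =>
    intro i h
    have hstep := hp.1 ⟨i + d, by omega⟩
    have h1 : (Fin.castSucc ⟨i + d, by omega⟩ : Fin (n + 1)) = ⟨i + d, by omega⟩ :=
      Fin.ext rfl
    have h2 : (Fin.succ ⟨i + d, by omega⟩ : Fin (n + 1)) = ⟨i + (d + 1), by omega⟩ :=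
      Fin.ext rfl
    rw [h1, h2] at hstep
    calc wdistSet X (p ⟨i, by omega⟩) (p ⟨i + (d + 1), by omega⟩)
        ≤ wdistSet X (p ⟨i, by omega⟩) (p ⟨i + d, by omega⟩)
          + wdistSet X (p ⟨i + d, by omega⟩) (p ⟨i + (d + 1), by omega⟩) :=
          wdist_triangle hgen _ _ _
      _ ≤ d + 1 := by
          have := ih i (by omega)
          omega

lemma geo_chain' {n : ℕ} {p : Fin (n + 1) → G} (hp : IsGeodesicSet X p)
    {i j : ℕ} (hij : i ≤ j) (hj : j ≤ n) :
    wdistSet X (p ⟨i, by omega⟩) (p ⟨j, by omega⟩) ≤ j - i := by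
  have hmain := geo_chain hgen hp (j - i) i (by omega)
  have e : (⟨j, by omega⟩ : Fin (n + 1)) = ⟨i + (j - i), by omega⟩ :=
    Fin.ext (show j = i + (j - i) by omega)
  rw [e]
  exact hmain

lemma geo_exact {n : ℕ} {p : Fin (n + 1) → G} (hp : IsGeodesicSet X p)
    {i j : ℕ} (hij : i ≤ j) (hj : j ≤ n) :
    wdistSet X (p ⟨i, by omega⟩) (p ⟨j, by omega⟩) = j - i := by
  refine le_antisymm (geo_chain' hgen hp hij hj) ?_
  have h0 : p 0 = p ⟨0, by omega⟩ := congrArg p (Fin.ext (by simp))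
  have hlast : p (Fin.last n) = p ⟨n, by omega⟩ := congrArg p (Fin.ext (by simp))
  have htot : wdistSet X (p ⟨0, by omega⟩) (p ⟨n, by omega⟩) = n := by
    rw [← h0, ← hlast]; exact hp.2
  have t1 : wdistSet X (p ⟨0, by omega⟩) (p ⟨n, by omega⟩)
      ≤ wdistSet X (p ⟨0, by omega⟩) (p ⟨i, by omega⟩)
        + wdistSet X (p ⟨i, by omega⟩) (p ⟨n, by omega⟩) := wdist_triangle hgen _ _ _
  have t2 : wdistSet X (p ⟨i, by omega⟩) (p ⟨n, by omega⟩)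
      ≤ wdistSet X (p ⟨i, by omega⟩) (p ⟨j, by omega⟩)
        + wdistSet X (p ⟨j, by omega⟩) (p ⟨n, by omega⟩) := wdist_triangle hgen _ _ _
  have u1 := geo_chain' hgen hp (Nat.zero_le i) (by omega)
  have u2 := geo_chain' hgen hp hj le_rfl
  omega

end Word

/-! ### Auxiliary lemmas: the action -/

section Action

variable {V : Type*} [DecidableEq V] {T : SimpleGraph V}

lemma rho_dist (hT : T.IsTree) (ρ : G →* Equiv.Perm V)
    (hadj : ∀ (g : G) (a b : V), T.Adj a b → T.Adj (ρ g a) (ρ g b))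
    (g : G) (a b : V) : T.dist (ρ g a) (ρ g b) = T.dist a b := by
  have key : ∀ (g : G) (a b : V), T.dist (ρ g a) (ρ g b) ≤ T.dist a b := by
    intro g a b
    obtain ⟨P, hP⟩ := SimpleGraph.Connected.exists_walk_length_eq_dist hT.isConnected a b
    have hle := SimpleGraph.dist_le
      (P.map ⟨fun x => ρ g x, fun {a b} h => hadj g _ _ h⟩)
    rwa [SimpleGraph.Walk.length_map, hP] at hle
  refine le_antisymm (key g a b) ?_
  have h2 := key g⁻¹ (ρ g a) (ρ g b)
  simpa [map_inv, Equiv.Perm.inv_def] using h2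

lemma proj_step (hT : T.IsTree) (ρ : G →* Equiv.Perm V)
    (hadj : ∀ (g : G) (a b : V), T.Adj a b → T.Adj (ρ g a) (ρ g b)) (v : V)
    {X : Set G} (hgen : Subgroup.closure X = ⊤)
    (hd : ∀ x : G, (x ∈ X ∨ x⁻¹ ∈ X) → T.dist v (ρ x v) ≤ 1)
    {g h : G} (hle : wdistSet X g h ≤ 1) :
    T.dist (ρ g v) (ρ h v) ≤ 1 := by
  rcases wdist_le_one hgen hle with rfl | ⟨x, hx, rfl⟩
  · simp [SimpleGraph.dist_self]
  · have hgx : ρ (g * x) v = ρ g (ρ x v) := by rw [map_mul]; rfl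
    rw [hgx, rho_dist hT ρ hadj]
    exact hd x hx

lemma stab_wlen (ρ : G →* Equiv.Perm V) (v : V) {X : Set G}
    (hstab : {g : G | ρ g v = v}.Finite) {g : G} (hg : ρ g v = v) :
    wlenSet X g ≤ RadSet X {g : G | ρ g v = v} :=
  le_csSup ((hstab.image _).bddAbove) ⟨g, hg, rfl⟩

lemma rho_sub (ρ : G →* Equiv.Perm V) {g h : G} {a : V} (hgh : ρ g a = ρ h a) :
    ρ (g⁻¹ * h) a = a := by
  simp only [map_mul, map_inv, Equiv.Perm.mul_apply]
  rw [← hgh]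
  exact Equiv.symm_apply_apply _ _

/-- The clamped orbit sequence of a discrete path. -/
lemma clamp_facts (hT : T.IsTree) (ρ : G →* Equiv.Perm V)
    (hadj : ∀ (g : G) (a b : V), T.Adj a b → T.Adj (ρ g a) (ρ g b)) (v : V)
    {X : Set G} (hgen : Subgroup.closure X = ⊤)
    (hd : ∀ x : G, (x ∈ X ∨ x⁻¹ ∈ X) → T.dist v (ρ x v) ≤ 1)
    {n : ℕ} (p : Fin (n + 1) → G)
    (hp1 : ∀ i : Fin n, wdistSet X (p i.castSucc) (p i.succ) ≤ 1) :
    ∃ s : ℕ → V, (∀ j (hj : j ≤ n), s j = ρ (p ⟨j, by omega⟩) v) ∧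
      (∀ j, j < n → T.dist (s j) (s (j + 1)) ≤ 1) := by
  refine ⟨fun j => ρ (p ⟨min j n, by omega⟩) v, fun j hj => ?_, fun j hj => ?_⟩
  · show ρ (p ⟨min j n, by omega⟩) v = ρ (p ⟨j, by omega⟩) v
    exact congrArg (fun z => ρ (p z) v) (Fin.ext (show min j n = j by omega))
  · show T.dist (ρ (p ⟨min j n, by omega⟩) v) (ρ (p ⟨min (j + 1) n, by omega⟩) v) ≤ 1
    have e1 : (⟨min j n, by omega⟩ : Fin (n + 1)) = Fin.castSucc ⟨j, hj⟩ :=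
      Fin.ext (show min j n = j by omega)
    have e2 : (⟨min (j + 1) n, by omega⟩ : Fin (n + 1)) = Fin.succ ⟨j, hj⟩ :=
      Fin.ext (show min (j + 1) n = j + 1 by omega)
    rw [e1, e2]
    exact proj_step hT ρ hadj v hgen hd (hp1 ⟨j, hj⟩)

/-- A full discrete path hits every vertex lying on all walks between the images of
its endpoints. -/
lemma path_hit (hT : T.IsTree) (ρ : G →* Equiv.Perm V)
    (hadj : ∀ (g : G) (a b : V), T.Adj a b → T.Adj (ρ g a) (ρ g b)) (v : V)
    {X : Set G} (hgen : Subgroup.closure X = ⊤)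
    (hd : ∀ x : G, (x ∈ X ∨ x⁻¹ ∈ X) → T.dist v (ρ x v) ≤ 1)
    {n : ℕ} (p : Fin (n + 1) → G)
    (hp1 : ∀ i : Fin n, wdistSet X (p i.castSucc) (p i.succ) ≤ 1) (m : V)
    (hm : OnGeo T (ρ (p 0) v) (ρ (p (Fin.last n)) v) m) :
    ∃ k : Fin (n + 1), ρ (p k) v = m := by
  obtain ⟨s, hs_eq, hs_step⟩ := clamp_facts hT ρ hadj v hgen hd p hp1
  have h0 : s 0 = ρ (p 0) v := by
    rw [hs_eq 0 (Nat.zero_le n)]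
    exact congrArg (fun z => ρ (p z) v) (Fin.ext (by simp))
  have hn : s n = ρ (p (Fin.last n)) v := by
    rw [hs_eq n le_rfl]
    exact congrArg (fun z => ρ (p z) v) (Fin.ext (by simp))
  obtain ⟨k, hk, hkm⟩ := seq_hit hT s n hs_step m (by rw [h0, hn]; exact hm)
  refine ⟨⟨k, by omega⟩, ?_⟩
  rw [← hs_eq k hk]
  exact hkm

/-- Main lemma: one side of a geodesic triangle is thin. -/
lemma side_thin (hT : T.IsTree) (ρ : G →* Equiv.Perm V)
    (hadj : ∀ (g : G) (a b : V), T.Adj a b → T.Adj (ρ g a) (ρ g b)) (v : V)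
    {X : Set G} (hgen : Subgroup.closure X = ⊤)
    (hd : ∀ x : G, (x ∈ X ∨ x⁻¹ ∈ X) → T.dist v (ρ x v) ≤ 1)
    (hstab : {g : G | ρ g v = v}.Finite)
    {n₁ n₂ n₃ : ℕ} (p : Fin (n₁ + 1) → G) (q : Fin (n₂ + 1) → G)
    (r : Fin (n₃ + 1) → G)
    (hp : IsGeodesicSet X p) (hq : IsGeodesicSet X q) (hr : IsGeodesicSet X r)
    (hpq : p (Fin.last n₁) = q 0) (hqr : q (Fin.last n₂) = r 0)
    (hrp : r (Fin.last n₃) = p 0) :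
    ThinAtSet X ((2 * RadSet X {g : G | ρ g v = v} : ℕ) : ℝ) p
      (Set.range q ∪ Set.range r) := by
  intro i
  set R := RadSet X {g : G | ρ g v = v} with hR
  obtain ⟨s, hs_eq, hs_step⟩ := clamp_facts hT ρ hadj v hgen hd p hp.1
  set iN := (i : ℕ) with hiNdef
  have hiN : iN ≤ n₁ := by omega
  set a' := ρ (p 0) v with ha'
  set b' := ρ (p (Fin.last n₁)) v with hb'
  set c' := ρ (r 0) v with hc'
  set w := ρ (p i) v with hw
  have h0 : s 0 = a' := by
    rw [hs_eq 0 (Nat.zero_le n₁)]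
    exact congrArg (fun z => ρ (p z) v) (Fin.ext (by simp))
  have hsn : s n₁ = b' := by
    rw [hs_eq n₁ le_rfl]
    exact congrArg (fun z => ρ (p z) v) (Fin.ext (by simp))
  have hsi : s iN = w := by
    rw [hs_eq iN hiN]
  obtain ⟨m, hmab, hmaw, hmwb⟩ := median hT a' b' w
  -- hit m on the segment [0, iN] of p
  obtain ⟨j1, hj1le, hj1⟩ := seq_hit hT s iN (fun j hj => hs_step j (by omega)) m
    (by rw [h0, hsi]; exact hmaw)
  -- hit m on the segment [iN, n₁] of p
  obtain ⟨j2', hj2le, hj2⟩ := seq_hit hT (fun j => s (iN + j)) (n₁ - iN)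
    (fun j hj => hs_step (iN + j) (by omega)) m
    (by
      have e2 : iN + (n₁ - iN) = n₁ := by omega
      simp only [Nat.add_zero, e2, hsi, hsn]
      exact hmwb)
  set j2 := iN + j2' with hj2def
  have hj2n : j2 ≤ n₁ := by omega
  have hj12 : j1 ≤ j2 := by omega
  -- the two hits are within distance R of each other along p
  have hgeo12 : wdistSet X (p ⟨j1, by omega⟩) (p ⟨j2, by omega⟩) = j2 - j1 :=
    geo_exact hgen hp hj12 hj2n
  have hv1 : ρ (p ⟨j1, by omega⟩) v = m := by rw [← hs_eq j1 (by omega)]; exact hj1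
  have hv2 : ρ (p ⟨j2, by omega⟩) v = m := by rw [← hs_eq j2 hj2n]; exact hj2
  have hstab12 : ρ ((p ⟨j1, by omega⟩)⁻¹ * p ⟨j2, by omega⟩) v = v :=
    rho_sub ρ (hv1.trans hv2.symm)
  have hR12 : j2 - j1 ≤ R := by
    rw [← hgeo12]
    exact stab_wlen ρ v hstab hstab12
  -- distance from p i to the first hit
  have hPart1 : wdistSet X (p i) (p ⟨j1, by omega⟩) ≤ R := by
    rw [wdist_symm hgen]
    have hgeoi : wdistSet X (p ⟨j1, by omega⟩) (p ⟨iN, by omega⟩) = iN - j1 :=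
      geo_exact hgen hp hj1le hiN
    have hieq : p ⟨iN, by omega⟩ = p i := congrArg p (Fin.ext rfl)
    rw [hieq] at hgeoi
    omega
  -- m is on one of the two other sides' geodesics in the tree
  rcases ongeo_split hT c' hmab with hcase | hcase
  · -- m between a' and c' : the side r (from c to a) passes through m
    have hr0 : ρ (r 0) v = c' := rfl
    have hrlast : ρ (r (Fin.last n₃)) v = a' := by rw [hrp]
    obtain ⟨k, hk⟩ := path_hit hT ρ hadj v hgen hd r hr.1 m
      (by rw [hr0, hrlast]; exact ongeo_symm hcase)
    refine ⟨r k, Or.inr ⟨k, rfl⟩, ?_⟩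
    have hstab2 : ρ ((p ⟨j1, by omega⟩)⁻¹ * r k) v = v :=
      rho_sub ρ (hv1.trans hk.symm)
    have hPart2 : wdistSet X (p ⟨j1, by omega⟩) (r k) ≤ R :=
      stab_wlen ρ v hstab hstab2
    have htri := wdist_triangle hgen (p i) (p ⟨j1, by omega⟩) (r k)
    have hfin : wdistSet X (p i) (r k) ≤ 2 * R := by omega
    exact_mod_cast Nat.cast_le.mpr hfin
  · -- m between c' and b' : the side q (from b to c) passes through m
    have hq0 : ρ (q 0) v = b' := by rw [← hpq]
    have hqlast : ρ (q (Fin.last n₂)) v = c' := by rw [hqr]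
    obtain ⟨k, hk⟩ := path_hit hT ρ hadj v hgen hd q hq.1 m
      (by rw [hq0, hqlast]; exact ongeo_symm hcase)
    refine ⟨q k, Or.inl ⟨k, rfl⟩, ?_⟩
    have hstab2 : ρ ((p ⟨j1, by omega⟩)⁻¹ * q k) v = v :=
      rho_sub ρ (hv1.trans hk.symm)
    have hPart2 : wdistSet X (p ⟨j1, by omega⟩) (q k) ≤ R :=
      stab_wlen ρ v hstab hstab2
    have htri := wdist_triangle hgen (p i) (p ⟨j1, by omega⟩) (q k)
    have hfin : wdistSet X (p i) (q k) ≤ 2 * R := by omega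
    exact_mod_cast Nat.cast_le.mpr hfin

end Action

/-- Let `G` act by automorphisms on a simplicial tree `T`, let `v` be a
vertex such that `d_T(v, x·v) ≤ 1` for every generator `x ∈ X ∪ X⁻¹` and such that the
stabilizer of `v` is finite. Then `Cay(G,X)` is `δ`-hyperbolic for
`δ = 2·Rad_X(Stab_G(v))`. -/
theorem cayley_hyperbolic_of_action_on_tree {V : Type*} (T : SimpleGraph V)
    (hT : T.IsTree) {G : Type*} [Group G] (ρ : G →* Equiv.Perm V)
    (hadj : ∀ (g : G) (a b : V), T.Adj a b → T.Adj (ρ g a) (ρ g b))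
    (v : V) (X : Set G) (hgen : Subgroup.closure X = ⊤)
    (hd : ∀ x : G, (x ∈ X ∨ x⁻¹ ∈ X) → T.dist v (ρ x v) ≤ 1)
    (hstab : {g : G | ρ g v = v}.Finite) :
    HypConstSet X ((2 * RadSet X {g : G | ρ g v = v} : ℕ) : ℝ) := by
  classical
  intro n₁ n₂ n₃ p q r hp hq hr hpq hqr hrp
  refine ⟨?_, ?_, ?_⟩
  · exact side_thin hT ρ hadj v hgen hd hstab p q r hp hq hr hpq hqr hrp
  · exact side_thin hT ρ hadj v hgen hd hstab q r p hq hr hp hqr hrp hpq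
  · exact side_thin hT ρ hadj v hgen hd hstab r p q hr hp hq hrp hpq hqr

end IsoSpecPaper
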